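/- For all real numbers A > 0, μ_t > 0, δ ≥ 0, p > 0 and θ̃ ∈ ℝ with |θ̃| < p: ∫₀^∞ w^{A+μ_t−1} · (1+w)^{δ} · e^{−p·w} · ₁F₁(A; A+μ_t; −θ̃·w) dw = Σ_{g=0}^{∞} ((A)_g·(−θ̃)^g/((A+μ_t)_g·g!)) · Γ(A+μ_t+g) · U(A+μ_t+g, A+μ_t+g+δ+1; p), the series on the right converging absolutely. (This is the evaluation of the expectation I₂ in Appendix C of the paper, the key analytic step in Theorem 2 for non-integer Nakagami parameters.) -/

import Mathlib

open MeasureTheory Real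

noncomputable section

/-- Ascending (Pochhammer) factorial `(a)_n`. -/
def poch (a : ℝ) (n : ℕ) : ℝ := (ascPochhammer ℝ n).eval a

/-- Kummer confluent hypergeometric function `₁F₁(a; b; z)`. -/
def oneF1 (a b z : ℝ) : ℝ := ∑' n : ℕ, (poch a n / poch b n) * z ^ n / (n.factorial : ℝ)

/-- Tricomi confluent hypergeometric function `U(a, b; z)` (for `a > 0`, `z > 0`). -/
def tricomiU (a b z : ℝ) : ℝ :=
  (1 / Real.Gamma a) * ∫ t in Set.Ioi (0:ℝ), Real.exp (-z * t) * t ^ (a - 1) * (1 + t) ^ (b - a - 1)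

lemma poch_pos {a : ℝ} (ha : 0 < a) (n : ℕ) : 0 < poch a n :=
  ascPochhammer_pos n a ha

lemma poch_le_poch {a b : ℝ} (ha : 0 < a) (hab : a ≤ b) (n : ℕ) : poch a n ≤ poch b n := by
  have hb : 0 < b := lt_of_lt_of_le ha hab
  induction n with
  | zero => simp [poch, ascPochhammer_zero]
  | succ n ih =>
    have h1 : 0 < poch a n := poch_pos ha n
    simp only [poch, ascPochhammer_succ_eval] at ih ⊢
    have h2 : (0:ℝ) ≤ a + n := by positivity
    have h3 : a + n ≤ b + n := by linarith
    exact mul_le_mul ih h3 h2 (poch_pos hb n).le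

/-- Integrability of `w^(s-1) * (1+w)^δ * exp(-c*w)` on `(0,∞)`. -/
lemma integrable_key {s c δ : ℝ} (hs : 0 < s) (hc : 0 < c) (hδ : 0 ≤ δ) :
    IntegrableOn (fun w : ℝ => w ^ (s - 1) * (1 + w) ^ δ * Real.exp (-c * w)) (Set.Ioi 0) := by
  obtain ⟨n, hn⟩ := exists_nat_ge δ
  have hint : ∀ k : ℕ,
      IntegrableOn (fun w : ℝ => w ^ (s - 1 + k) * Real.exp (-c * w)) (Set.Ioi 0) := by
    intro k
    have h := integrableOn_rpow_mul_exp_neg_mul_rpow (p := 1) (s := s - 1 + k) (b := c)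
      (by have : (0:ℝ) ≤ k := Nat.cast_nonneg k; linarith) one_pos hc
    simpa [Real.rpow_one] using h
  have hg : IntegrableOn
      (fun w : ℝ => ∑ k ∈ Finset.range (n+1),
        (n.choose k : ℝ) * (w ^ (s - 1 + k) * Real.exp (-c * w))) (Set.Ioi 0) :=
    integrable_finset_sum _ (fun k _ => (hint k).const_mul _)
  apply hg.mono'
  · apply ContinuousOn.aestronglyMeasurable _ measurableSet_Ioi
    apply ContinuousOn.mul
    apply ContinuousOn.mul
    · exact fun x hx =>
        (Real.continuousAt_rpow_const x (s-1) (Or.inl (ne_of_gt hx))).continuousWithinAt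
    · exact ((continuous_const.add continuous_id).continuousOn).rpow_const
        (fun x _ => Or.inr hδ)
    · exact (Real.continuous_exp.comp (continuous_const.mul continuous_id)).continuousOn
  · rw [ae_restrict_iff' measurableSet_Ioi]
    filter_upwards with w hw
    have hw0 : (0:ℝ) < w := hw
    have h1w : (0:ℝ) < 1 + w := by linarith
    have hnn : 0 ≤ w ^ (s - 1) * (1 + w) ^ δ * Real.exp (-c * w) := by positivity
    rw [Real.norm_eq_abs, abs_of_nonneg hnn]
    have hpow : (1 + w) ^ δ ≤ ∑ k ∈ Finset.range (n+1), (n.choose k : ℝ) * w ^ k := by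
      have h1 : (1 + w) ^ δ ≤ (1 + w) ^ (n : ℝ) :=
        Real.rpow_le_rpow_of_exponent_le (by linarith) hn
      have h2 : (1 + w) ^ (n : ℝ) = (1 + w) ^ n := Real.rpow_natCast _ n
      have h3 : (1 + w) ^ n = ∑ k ∈ Finset.range (n+1), (n.choose k : ℝ) * w ^ k := by
        rw [add_comm, add_pow]
        refine Finset.sum_congr rfl (fun k _ => by ring)
      calc (1 + w) ^ δ ≤ (1 + w) ^ (n : ℝ) := h1
        _ = (1 + w) ^ n := h2
        _ = ∑ k ∈ Finset.range (n+1), (n.choose k : ℝ) * w ^ k := h3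
    calc w ^ (s - 1) * (1 + w) ^ δ * Real.exp (-c * w)
        ≤ w ^ (s - 1) * (∑ k ∈ Finset.range (n+1), (n.choose k : ℝ) * w ^ k)
            * Real.exp (-c * w) := by
          apply mul_le_mul_of_nonneg_right _ (Real.exp_nonneg _)
          exact mul_le_mul_of_nonneg_left hpow (by positivity)
      _ = ∑ k ∈ Finset.range (n+1), (n.choose k : ℝ) * (w ^ (s - 1 + k) * Real.exp (-c * w)) := by
          rw [Finset.mul_sum, Finset.sum_mul]
          refine Finset.sum_congr rfl (fun k _ => ?_)
          rw [Real.rpow_add hw0, Real.rpow_natCast]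
          ring

lemma exp_eq_tsum_real (x : ℝ) : Real.exp x = ∑' n : ℕ, x ^ n / n.factorial := by
  rw [Real.exp_eq_exp_ℝ, NormedSpace.exp_eq_tsum_div]

theorem integral_I2_noninteger_case
    (A μt δ p θ : ℝ) (hA : 0 < A) (hμt : 0 < μt) (hδ : 0 ≤ δ) (hp : 0 < p)
    (hθ : |θ| < p) :
    (∫ w in Set.Ioi (0:ℝ),
        w ^ (A + μt - 1) * (1 + w) ^ δ * Real.exp (-p * w) * oneF1 A (A + μt) (-θ * w))
      = (∑' g : ℕ,
          (poch A g * (-θ) ^ g / (poch (A + μt) g * (g.factorial : ℝ))) *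
            Real.Gamma (A + μt + g) * tricomiU (A + μt + g) (A + μt + g + δ + 1) p)
    ∧ Summable (fun g : ℕ =>
        |(poch A g * (-θ) ^ g / (poch (A + μt) g * (g.factorial : ℝ))) *
          Real.Gamma (A + μt + g) * tricomiU (A + μt + g) (A + μt + g + δ + 1) p|) := by
  set B : ℝ := A + μt with hB
  have hB0 : 0 < B := by positivity
  set q : ℝ := |θ| with hq
  have hq0 : 0 ≤ q := abs_nonneg θ
  have hpq : 0 < p - q := by linarith
  -- coefficients
  set c : ℕ → ℝ := fun g => poch A g * (-θ) ^ g / (poch B g * (g.factorial : ℝ)) with hc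
  -- summand functions
  set f : ℕ → ℝ → ℝ := fun g w => c g * (w ^ (B + g - 1) * (1 + w) ^ δ * Real.exp (-p * w))
    with hf
  set G : ℕ → ℝ → ℝ := fun g w =>
    (q ^ g / (g.factorial : ℝ)) * (w ^ (B + g - 1) * (1 + w) ^ δ * Real.exp (-p * w)) with hG
  have hcle : ∀ g, |c g| ≤ q ^ g / (g.factorial : ℝ) := by
    intro g
    have h1 : 0 < poch A g := poch_pos hA g
    have h2 : 0 < poch B g := poch_pos hB0 g
    have h3 : poch A g ≤ poch B g := poch_le_poch hA (by simp [hB]; linarith) g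
    have hfac : (0:ℝ) < g.factorial := by positivity
    rw [hc, abs_div, abs_mul, abs_mul, abs_pow, abs_neg, abs_of_pos h1, abs_of_pos h2,
      abs_of_pos hfac]
    rw [div_le_div_iff₀ (by positivity) (by positivity)]
    calc poch A g * q ^ g * (g.factorial : ℝ)
        ≤ poch B g * q ^ g * (g.factorial : ℝ) := by
          apply mul_le_mul_of_nonneg_right _ hfac.le
          exact mul_le_mul_of_nonneg_right h3 (by positivity)
      _ = q ^ g * (poch B g * (g.factorial : ℝ)) := by ring
  -- integrability of each f g and G g
  have hGint : ∀ g : ℕ, IntegrableOn (G g) (Set.Ioi 0) := by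
    intro g
    have := (integrable_key (s := B + g) (c := p) (δ := δ) (by positivity) hp hδ).const_mul
      (q ^ g / (g.factorial : ℝ))
    simpa [hG, IntegrableOn] using this
  have hfint : ∀ g : ℕ, IntegrableOn (f g) (Set.Ioi 0) := by
    intro g
    have := (integrable_key (s := B + g) (c := p) (δ := δ) (by positivity) hp hδ).const_mul (c g)
    simpa [hf, IntegrableOn] using this
  -- pointwise series identity for dominating function
  have hFdom : IntegrableOn
      (fun w : ℝ => w ^ (B - 1) * (1 + w) ^ δ * Real.exp (-(p - q) * w)) (Set.Ioi 0) :=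
    integrable_key hB0 hpq hδ
  have hGpt : ∀ w : ℝ, 0 < w →
      HasSum (fun g => G g w) (w ^ (B - 1) * (1 + w) ^ δ * Real.exp (-(p - q) * w)) := by
    intro w hw
    have hrw : ∀ g : ℕ, G g w =
        (w ^ (B - 1) * (1 + w) ^ δ * Real.exp (-p * w)) * ((q * w) ^ g / (g.factorial : ℝ)) := by
      intro g
      have : w ^ (B + g - 1) = w ^ (B - 1) * w ^ g := by
        rw [show B + (g:ℝ) - 1 = (B - 1) + g by ring, Real.rpow_add hw, Real.rpow_natCast]
      rw [hG]; simp only [this, mul_pow]; ring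
    have hs : Summable (fun g : ℕ => (q * w) ^ g / (g.factorial : ℝ)) :=
      Real.summable_pow_div_factorial (q * w)
    have hsum : HasSum (fun g : ℕ => (q * w) ^ g / (g.factorial : ℝ)) (Real.exp (q * w)) := by
      rw [exp_eq_tsum_real]; exact hs.hasSum
    have := hsum.mul_left (w ^ (B - 1) * (1 + w) ^ δ * Real.exp (-p * w))
    have heq : w ^ (B - 1) * (1 + w) ^ δ * Real.exp (-p * w) * Real.exp (q * w)
        = w ^ (B - 1) * (1 + w) ^ δ * Real.exp (-(p - q) * w) := by
      rw [mul_assoc, ← Real.exp_add]; ring_nf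
    rw [heq] at this
    simpa only [← hrw] using this
  -- summability of integrals of G
  have hGnonneg : ∀ g : ℕ, ∀ w ∈ Set.Ioi (0:ℝ), 0 ≤ G g w := by
    intro g w hw
    have hw0 : (0:ℝ) < w := hw
    have : (0:ℝ) < 1 + w := by linarith
    rw [hG]; positivity
  have hSG : Summable (fun g : ℕ => ∫ w in Set.Ioi (0:ℝ), G g w) := by
    apply summable_of_sum_range_le (c := ∫ w in Set.Ioi (0:ℝ),
      w ^ (B - 1) * (1 + w) ^ δ * Real.exp (-(p - q) * w))
    · intro g; exact setIntegral_nonneg measurableSet_Ioi (hGnonneg g)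
    · intro N
      rw [← integral_finset_sum _ (fun g _ => hGint g)]
      apply setIntegral_mono_on (integrable_finset_sum _ (fun g _ => hGint g)) hFdom
        measurableSet_Ioi
      intro w hw
      exact sum_le_hasSum (Finset.range N) (fun g _ => hGnonneg g w hw) (hGpt w hw)
  -- |f g| ≤ G g, hence summability of ∫ ‖f g‖
  have hfleG : ∀ g : ℕ, ∀ w ∈ Set.Ioi (0:ℝ), ‖f g w‖ ≤ G g w := by
    intro g w hw
    have hw0 : (0:ℝ) < w := hw
    have h1w : (0:ℝ) < 1 + w := by linarith
    rw [hf, hG, Real.norm_eq_abs, abs_mul,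
      abs_of_nonneg (show 0 ≤ w ^ (B + g - 1) * (1 + w) ^ δ * Real.exp (-p * w) by positivity)]
    exact mul_le_mul_of_nonneg_right (hcle g) (by positivity)
  have hfnormint : ∀ g : ℕ, ∫ w in Set.Ioi (0:ℝ), ‖f g w‖ ≤ ∫ w in Set.Ioi (0:ℝ), G g w := by
    intro g
    exact setIntegral_mono_on (hfint g).norm (hGint g) measurableSet_Ioi (hfleG g)
  have hSf : Summable (fun g : ℕ => ∫ w in Set.Ioi (0:ℝ), ‖f g w‖) := by
    apply Summable.of_nonneg_of_le
      (fun g => setIntegral_nonneg measurableSet_Ioi (fun w _ => norm_nonneg _))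
      hfnormint hSG
  -- swap integral and sum
  have hswap : ∑' g, (∫ w in Set.Ioi (0:ℝ), f g w)
      = ∫ w in Set.Ioi (0:ℝ), ∑' g, f g w :=
    integral_tsum_of_summable_integral_norm hfint hSf
  -- identify integrand with the tsum
  have hintegrand : ∀ w ∈ Set.Ioi (0:ℝ),
      w ^ (A + μt - 1) * (1 + w) ^ δ * Real.exp (-p * w) * oneF1 A (A + μt) (-θ * w)
        = ∑' g, f g w := by
    intro w hw
    have hw0 : (0:ℝ) < w := hw
    rw [oneF1, ← tsum_mul_left]
    refine tsum_congr (fun g => ?_)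
    have hpow : w ^ (B + g - 1) = w ^ (B - 1) * w ^ g := by
      rw [show B + (g:ℝ) - 1 = (B - 1) + g by ring, Real.rpow_add hw0, Real.rpow_natCast]
    rw [hf, hc]
    simp only [hpow]; simp only [hB]
    have h2 : 0 < poch (A + μt) g := poch_pos hB0 g
    have hfac : (0:ℝ) < g.factorial := by positivity
    field_simp
    ring
  -- evaluate each ∫ f g
  have hterm : ∀ g : ℕ,
      (∫ w in Set.Ioi (0:ℝ), f g w)
        = (poch A g * (-θ) ^ g / (poch (A + μt) g * (g.factorial : ℝ))) *
            Real.Gamma (A + μt + g) * tricomiU (A + μt + g) (A + μt + g + δ + 1) p := by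
    intro g
    have hGamma : Real.Gamma (A + μt + g) ≠ 0 :=
      (Real.Gamma_pos_of_pos (by positivity)).ne'
    have hexp : A + μt + (g:ℝ) + δ + 1 - (A + μt + g) - 1 = δ := by ring
    have hI : (∫ t in Set.Ioi (0:ℝ), Real.exp (-p * t) * t ^ (A + μt + (g:ℝ) - 1) * (1 + t) ^ δ)
        = ∫ w in Set.Ioi (0:ℝ), w ^ (B + g - 1) * (1 + w) ^ δ * Real.exp (-p * w) := by
      refine setIntegral_congr_fun measurableSet_Ioi (fun t _ => ?_)
      rw [hB]; ring
    have hU : Real.Gamma (A + μt + (g:ℝ)) * tricomiU (A + μt + g) (A + μt + g + δ + 1) p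
        = ∫ w in Set.Ioi (0:ℝ), w ^ (B + g - 1) * (1 + w) ^ δ * Real.exp (-p * w) := by
      rw [tricomiU, hexp, ← mul_assoc, mul_one_div_cancel hGamma, one_mul, hI]
    rw [hf, integral_const_mul, mul_assoc, hU, hc]
  -- conclude
  constructor
  · rw [setIntegral_congr_fun measurableSet_Ioi hintegrand, ← hswap]
    exact tsum_congr hterm
  · apply Summable.of_nonneg_of_le (fun g => abs_nonneg _) _ hSf
    intro g
    rw [← hterm g]
    rw [← Real.norm_eq_abs]
    exact norm_integral_le_integral_norm _

end
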